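/- Let H, N be bounded operators on a Hilbert space with H^2 = I, H* = NHN, N^2 = -I, and let M = {x : Hx = x} be the fixed subspace of H. If HNx = -Nx for all x ∈ M, then H is unitary. -/

import Mathlib

open ContinuousLinearMap

/-- If `H² = I`, `H* = N H N`, `N² = -I`, the whole space decomposes as
`M ⊕ N M` where `M = {x : H x = x}`, and `H N x = -N x` for all `x ∈ M`,
then `H` is unitary. -/
theorem fixed_condition_implies_unitary {E : Type*} [NormedAddCommGroup E]
    [InnerProductSpace ℂ E] [CompleteSpace E]
    (H N : E →L[ℂ] E)
    (hH2 : H ∘L H = 1)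
    (hHadj : adjoint H = N ∘L H ∘L N)
    (hN2 : N ∘L N = -1)
    (hdecomp : ∀ x : E, ∃ g h : E, H g = g ∧ H h = h ∧ x = g + N h)
    (hfix : ∀ x : E, H x = x → H (N x) = -(N x)) :
    adjoint H ∘L H = 1 ∧ H ∘L adjoint H = 1 := by
  have hNN : ∀ y, N (N y) = -y := fun y => by
    have := ContinuousLinearMap.ext_iff.mp hN2 y
    simpa using this
  have hadj : ∀ y, adjoint H y = N (H (N y)) := fun y => by
    have := ContinuousLinearMap.ext_iff.mp hHadj y
    simpa using this
  constructor <;> ext x <;> obtain ⟨g, h, hg, hh, rfl⟩ := hdecomp x <;>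
    simp only [comp_apply, _root_.one_apply_eq_self]
  · have h1 : H (g + N h) = g - N h := by
      rw [map_add, hg, hfix h hh]; abel
    rw [h1, hadj]
    have h2 : N (g - N h) = N g + h := by
      rw [map_sub, hNN]; abel
    rw [h2, map_add, hfix g hg, hh, map_add, map_neg, hNN]
    abel
  · have h1 : adjoint H (g + N h) = g - N h := by
      rw [hadj]
      have : N (g + N h) = N g - h := by rw [map_add, hNN]; abel
      rw [this, map_sub, hfix g hg, hh, map_sub, map_neg, hNN]
      abel
    rw [h1, map_sub, hg, hfix h hh]
    abel
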